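/- arXiv:2205.04984 — 2 statements merged into one kernel-verified Lean document; each statement's English description precedes it below -/
import Mathlib

section
/- For every integer k ≥ 2 and every constant c > 0, there exists a finite digraph D that is the arc-disjoint union of k strongly connected spanning subdigraphs, such that for every decomposition of the arcs of D into k strongly connected spanning subdigraphs S1, ..., Sk there exist distinct indices i, j and a vertex v with |d^out_{Si}(v) - d^out_{Sj}(v)| > c. -/
/-- A multidigraph: arcs `E` with an endpoint map giving (tail, head). -/
structure Multidigraph (V : Type*) (E : Type*) where
  ends : E → V × V

namespace Multidigraph

variable {V E : Type*}

/-- The out-degree of `v` in the spanning subdigraph with arc set `S`. -/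
noncomputable def dOut (D : Multidigraph V E) (S : Set E) (v : V) : ℕ :=
  {e ∈ S | (D.ends e).1 = v}.ncard

/-- The in-degree of `v` in the spanning subdigraph with arc set `S`. -/
noncomputable def dIn (D : Multidigraph V E) (S : Set E) (v : V) : ℕ :=
  {e ∈ S | (D.ends e).2 = v}.ncard

/-- Directed reachability using arcs in `S`. -/
def Reach (D : Multidigraph V E) (S : Set E) (a b : V) : Prop :=
  Relation.ReflTransGen (fun u w => ∃ e ∈ S, D.ends e = (u, w)) a b

/-- `S` is the arc set of a spanning arborescence: there is a root from which
every vertex is reachable, the root has in-degree 0, and every other vertex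
has in-degree 1. -/
def IsArborescence (D : Multidigraph V E) (S : Set E) : Prop :=
  ∃ r : V, (∀ v, D.Reach S r v) ∧ D.dIn S r = 0 ∧ ∀ v, v ≠ r → D.dIn S v = 1

/-- The spanning subdigraph with arc set `S` is strongly connected. -/
def StronglyConnected (D : Multidigraph V E) (S : Set E) : Prop :=
  ∀ a b : V, D.Reach S a b

end Multidigraph

section Aux

inductive Arc (P K : ℕ) : Type where
  | e (t : Fin (P+1))
  | g (t : Fin (P+1)) (i : Fin (K-1))
  | a (t : Fin (P+1))
  | uw (t : Fin (P+1)) (i : Fin (K-1))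
  | uv (t : Fin (P+1)) (i : Fin K)
  | wv (i : Fin (K-1))
  deriving DecidableEq, Fintype

abbrev Vtx (P : ℕ) := Option (Fin (P+1) × Bool)

variable {P K : ℕ}

def Arc.tail : Arc P K → Vtx P
  | .e _ => none
  | .g t _ => if _ : t.val = 0 then none
      else some (⟨t.val - 1, Nat.lt_of_le_of_lt (Nat.sub_le _ _) t.isLt⟩, true)
  | .a t => some (t, true)
  | .uw t _ => some (t, false)
  | .uv t _ => some (t, false)
  | .wv _ => some (⟨P, Nat.lt_succ_self P⟩, true)

def Arc.head : Arc P K → Vtx P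
  | .e t => some (t, true)
  | .g t _ => some (t, false)
  | .a t => some (t, false)
  | .uw t _ => some (t, true)
  | .uv _ _ => none
  | .wv _ => none

def MD (P K : ℕ) : Multidigraph (Vtx P) (Arc P K) := ⟨fun y => (y.tail, y.head)⟩

@[simp] lemma MD_ends (y : Arc P K) : (MD P K).ends y = (y.tail, y.head) := rfl

def owner (hK : 0 < K) : Arc P K → Fin K
  | .e _ => ⟨0, hK⟩
  | .a _ => ⟨0, hK⟩
  | .g _ i => ⟨i.val + 1, by have := i.isLt; omega⟩
  | .uw _ i => ⟨i.val + 1, by have := i.isLt; omega⟩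
  | .uv _ i => i
  | .wv i => ⟨i.val + 1, by have := i.isLt; omega⟩

lemma owner_strong (hK : 0 < K) (j : Fin K) :
    (MD P K).StronglyConnected {y : Arc P K | owner hK y = j} := by
  set S : Set (Arc P K) := {y : Arc P K | owner hK y = j} with hS
  have hone : ∀ y : Arc P K, owner hK y = j → (MD P K).Reach S y.tail y.head := by
    intro y hy
    exact Relation.ReflTransGen.single ⟨y, hy, rfl⟩
  have huv : ∀ t : Fin (P+1), (MD P K).Reach S (some (t, false)) none := by
    intro t
    exact hone (Arc.uv t j) rfl
  by_cases hj : j.val = 0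
  · -- part 0
    have h0j : ∀ y : Arc P K, owner hK y = ⟨0, hK⟩ → owner hK y = j := by
      intro y hy; rw [hy]; exact Fin.ext hj.symm
    have from_v : ∀ x : Vtx P, (MD P K).Reach S none x := by
      rintro (_ | ⟨t, b⟩)
      · exact Relation.ReflTransGen.refl
      · cases b with
        | false =>
          exact Relation.ReflTransGen.trans (hone (Arc.e t) (h0j _ rfl))
            (hone (Arc.a t) (h0j _ rfl))
        | true => exact hone (Arc.e t) (h0j _ rfl)
    have to_v : ∀ x : Vtx P, (MD P K).Reach S x none := by
      rintro (_ | ⟨t, b⟩)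
      · exact Relation.ReflTransGen.refl
      · cases b with
        | false => exact huv t
        | true => exact Relation.ReflTransGen.trans (hone (Arc.a t) (h0j _ rfl)) (huv t)
    intro x z
    exact (to_v x).trans (from_v z)
  · -- part with index ≥ 1
    set i : Fin (K-1) := ⟨j.val - 1, by have := j.isLt; omega⟩ with hi
    have hg : ∀ t, owner hK (Arc.g (P := P) t i) = j := by
      intro t; apply Fin.ext
      show i.val + 1 = j.val
      have : i.val = j.val - 1 := rfl
      omega
    have huww : ∀ t, owner hK (Arc.uw (P := P) t i) = j := by
      intro t; apply Fin.ext
      show i.val + 1 = j.val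
      have : i.val = j.val - 1 := rfl
      omega
    have hwvv : owner hK (Arc.wv (P := P) (K := K) i) = j := by
      apply Fin.ext
      show i.val + 1 = j.val
      have : i.val = j.val - 1 := rfl
      omega
    have from_v : ∀ (s : ℕ) (h : s < P + 1),
        (MD P K).Reach S none (some (⟨s, h⟩, false)) ∧
        (MD P K).Reach S none (some (⟨s, h⟩, true)) := by
      intro s
      induction s with
      | zero =>
        intro h
        have h1 : (MD P K).Reach S none (some (⟨0, h⟩, false)) :=
          hone (Arc.g ⟨0, h⟩ i) (hg _)
        exact ⟨h1, h1.trans (hone (Arc.uw ⟨0, h⟩ i) (huww _))⟩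
      | succ s ih =>
        intro h
        have hs : s < P + 1 := by omega
        have h1 : (MD P K).Reach S none (some (⟨s + 1, h⟩, false)) :=
          (ih hs).2.trans (hone (Arc.g ⟨s + 1, h⟩ i) (hg _))
        exact ⟨h1, h1.trans (hone (Arc.uw ⟨s + 1, h⟩ i) (huww _))⟩
    have to_v : ∀ x : Vtx P, (MD P K).Reach S x none := by
      rintro (_ | ⟨t, b⟩)
      · exact Relation.ReflTransGen.refl
      · cases b with
        | false => exact huv t
        | true =>
          by_cases ht : t.val = P
          · have heq : t = ⟨P, Nat.lt_succ_self P⟩ := Fin.ext ht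
            rw [heq]
            exact hone (Arc.wv i) hwvv
          · have h2 : t.val + 1 < P + 1 := by have := t.isLt; omega
            exact Relation.ReflTransGen.trans (hone (Arc.g ⟨t.val + 1, h2⟩ i) (hg _)) (huv _)
    intro x z
    refine (to_v x).trans ?_
    rcases z with _ | ⟨t, b⟩
    · exact Relation.ReflTransGen.refl
    · have hfv := from_v t.val t.isLt
      cases b with
      | false => exact hfv.1
      | true => exact hfv.2

lemma exists_decomp (P K : ℕ) (hK : 0 < K) :
    ∃ f : Fin K → Set (Arc P K), (⋃ i, f i) = Set.univ ∧
      (∀ i j, i ≠ j → Disjoint (f i) (f j)) ∧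
      ∀ i, (MD P K).StronglyConnected (f i) := by
  refine ⟨fun j => {y | owner hK y = j}, ?_, ?_, owner_strong hK⟩
  · ext y
    simp [Set.mem_iUnion]
  · intro i j hij
    rw [Set.disjoint_left]
    rintro y hy hy'
    exact hij (hy.symm.trans hy')

end Aux

section Forcing

variable {P K : ℕ}

/-- crossing arcs of the region cut: `e t` and the couplers into `u t`. -/
def psiC (t : Fin (P+1)) (j : Fin K) : Arc P K :=
  if _ : j.val = 0 then .e t
  else .g t ⟨j.val - 1, by have := j.isLt; omega⟩

/-- in-arcs of `u t`. -/
def psiB (t : Fin (P+1)) (j : Fin K) : Arc P K :=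
  if _ : j.val = 0 then .a t
  else .g t ⟨j.val - 1, by have := j.isLt; omega⟩

/-- out-arcs of `w s` for `s < P`. -/
def psiW (s : ℕ) (hs : s + 1 < P + 1) (j : Fin K) : Arc P K :=
  if _ : j.val = 0 then .a ⟨s, by omega⟩
  else .g ⟨s + 1, hs⟩ ⟨j.val - 1, by have := j.isLt; omega⟩

lemma psiC_of_e (hK : 0 < K) (t : Fin (P+1)) :
    ∃ j : Fin K, psiC t j = Arc.e t ∧ j.val = 0 :=
  ⟨⟨0, hK⟩, dif_pos rfl, rfl⟩

lemma psiC_of_g (t : Fin (P+1)) (i : Fin (K-1)) :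
    ∃ j : Fin K, psiC t j = Arc.g t i ∧ j.val = i.val + 1 := by
  refine ⟨⟨i.val + 1, by have := i.isLt; omega⟩, ?_, rfl⟩
  unfold psiC
  rw [dif_neg (by simp)]
  rfl

lemma psiB_of_a (hK : 0 < K) (t : Fin (P+1)) :
    ∃ j : Fin K, psiB t j = Arc.a t ∧ j.val = 0 :=
  ⟨⟨0, hK⟩, dif_pos rfl, rfl⟩

lemma psiB_of_g (t : Fin (P+1)) (i : Fin (K-1)) :
    ∃ j : Fin K, psiB t j = Arc.g t i ∧ j.val = i.val + 1 := by
  refine ⟨⟨i.val + 1, by have := i.isLt; omega⟩, ?_, rfl⟩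
  unfold psiB
  rw [dif_neg (by simp)]
  rfl

lemma psiW_of_a (hK : 0 < K) {s : ℕ} (hs : s + 1 < P + 1) :
    ∃ j : Fin K, psiW s hs j = Arc.a ⟨s, by omega⟩ ∧ j.val = 0 :=
  ⟨⟨0, hK⟩, dif_pos rfl, rfl⟩

lemma psiW_of_g {s : ℕ} (hs : s + 1 < P + 1) (i : Fin (K-1)) :
    ∃ j : Fin K, psiW s hs j = Arc.g ⟨s + 1, hs⟩ i ∧ j.val = i.val + 1 := by
  refine ⟨⟨i.val + 1, by have := i.isLt; omega⟩, ?_, rfl⟩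
  unfold psiW
  rw [dif_neg (by simp)]
  rfl

lemma psiC_inj (t : Fin (P+1)) : Function.Injective (psiC (P := P) (K := K) t) := by
  intro j j' h
  unfold psiC at h
  by_cases h1 : j.val = 0 <;> by_cases h2 : j'.val = 0
  · exact Fin.ext (by omega)
  · rw [dif_pos h1, dif_neg h2] at h; exact absurd h (by simp)
  · rw [dif_neg h1, dif_pos h2] at h; exact absurd h (by simp)
  · rw [dif_neg h1, dif_neg h2] at h
    simp only [Arc.g.injEq] at h
    have hv : j.val - 1 = j'.val - 1 := congrArg Fin.val h.2
    exact Fin.ext (by omega)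

lemma psiW_inj (s : ℕ) (hs : s + 1 < P + 1) :
    Function.Injective (psiW (K := K) s hs) := by
  intro j j' h
  unfold psiW at h
  by_cases h1 : j.val = 0 <;> by_cases h2 : j'.val = 0
  · exact Fin.ext (by omega)
  · rw [dif_pos h1, dif_neg h2] at h; exact absurd h (by simp)
  · rw [dif_neg h1, dif_pos h2] at h; exact absurd h (by simp)
  · rw [dif_neg h1, dif_neg h2] at h
    simp only [Arc.g.injEq] at h
    have hv : j.val - 1 = j'.val - 1 := congrArg Fin.val h.2
    exact Fin.ext (by omega)

lemma keyUniq {α : Type*} {K : ℕ} (f : Fin K → Set α)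
    (hd : ∀ i j, i ≠ j → Disjoint (f i) (f j))
    (ψ : Fin K → α) (hψ : Function.Injective ψ)
    (hex : ∀ i, ∃ j, ψ j ∈ f i) :
    ∀ i j j', ψ j ∈ f i → ψ j' ∈ f i → j = j' := by
  classical
  choose F hF using hex
  have hFinj : Function.Injective F := by
    intro i i' h
    by_contra hne
    exact Set.disjoint_left.mp (hd i i' hne) (hF i) (h ▸ hF i')
  have hFsurj : Function.Surjective F := Finite.surjective_of_injective hFinj
  have key : ∀ i j, ψ j ∈ f i → j = F i := by
    intro i j hj
    obtain ⟨i', rfl⟩ := hFsurj j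
    have hii : i' = i := by
      by_contra hne
      exact Set.disjoint_left.mp (hd i' i hne) (hF i') hj
    rw [hii]
  intro i j j' h h'
  rw [key i j h, key i j' h']

lemma enters_set {S : Set (Arc P K)} {U : Set (Vtx P)} {u w : Vtx P}
    (h : (MD P K).Reach S u w) (hu : u ∉ U) (hw : w ∈ U) :
    ∃ y ∈ S, y.tail ∉ U ∧ y.head ∈ U := by
  unfold Multidigraph.Reach at h
  revert hw
  induction h with
  | refl => intro hw; exact absurd hw hu
  | @tail b c h1 h2 ih =>
    intro hw
    obtain ⟨y, hyS, hy⟩ := h2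
    have hy1 : y.tail = b := congrArg Prod.fst hy
    have hy2 : y.head = c := congrArg Prod.snd hy
    by_cases hb : b ∈ U
    · exact ih hb
    · exact ⟨y, hyS, by rw [hy1]; exact hb, by rw [hy2]; exact hw⟩

lemma last_arc {S : Set (Arc P K)} {u w : Vtx P}
    (h : (MD P K).Reach S u w) (hne : u ≠ w) :
    ∃ y ∈ S, y.head = w := by
  unfold Multidigraph.Reach at h
  revert hne
  induction h with
  | refl => intro hne; exact absurd rfl hne
  | @tail b c h1 h2 _ =>
    intro _
    obtain ⟨y, hyS, hy⟩ := h2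
    exact ⟨y, hyS, congrArg Prod.snd hy⟩

lemma first_arc {S : Set (Arc P K)} {u w : Vtx P}
    (h : (MD P K).Reach S u w) (hne : u ≠ w) :
    ∃ y ∈ S, y.tail = u := by
  rcases Relation.ReflTransGen.cases_head h with heq | ⟨b, hb, -⟩
  · exact absurd heq hne
  · obtain ⟨y, hyS, hy⟩ := hb
    exact ⟨y, hyS, congrArg Prod.fst hy⟩

end Forcing

section Forcing2

variable {P K : ℕ}

lemma head_in_region (hK : 0 < K) {t : Fin (P+1)} {y : Arc P K}
    (ht : ∀ b, y.tail ≠ some (t, b)) (hh : ∃ b, y.head = some (t, b)) :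
    ∃ j, y = psiC t j := by
  obtain ⟨b, hb⟩ := hh
  cases y with
  | e t' =>
    have h1 : t' = t ∧ true = b := by simpa [Arc.head] using hb
    obtain ⟨rfl, -⟩ := h1
    obtain ⟨jj, hjj, -⟩ := psiC_of_e hK t'
    exact ⟨jj, hjj.symm⟩
  | g t' i =>
    have h1 : t' = t ∧ false = b := by simpa [Arc.head] using hb
    obtain ⟨rfl, -⟩ := h1
    obtain ⟨jj, hjj, -⟩ := psiC_of_g t' i
    exact ⟨jj, hjj.symm⟩
  | a t' =>
    have h1 : t' = t ∧ false = b := by simpa [Arc.head] using hb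
    obtain ⟨rfl, -⟩ := h1
    exact (ht true rfl).elim
  | uw t' i =>
    have h1 : t' = t ∧ true = b := by simpa [Arc.head] using hb
    obtain ⟨rfl, -⟩ := h1
    exact (ht false rfl).elim
  | uv t' i => simp [Arc.head] at hb
  | wv i => simp [Arc.head] at hb

lemma head_is_u (hK : 0 < K) {t : Fin (P+1)} {y : Arc P K}
    (hh : y.head = some (t, false)) : ∃ j, y = psiB t j := by
  cases y with
  | e t' => simp [Arc.head] at hh
  | g t' i =>
    have h1 : t' = t := by simpa [Arc.head] using hh
    obtain rfl := h1
    obtain ⟨jj, hjj, -⟩ := psiB_of_g t' i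
    exact ⟨jj, hjj.symm⟩
  | a t' =>
    have h1 : t' = t := by simpa [Arc.head] using hh
    obtain rfl := h1
    obtain ⟨jj, hjj, -⟩ := psiB_of_a hK t'
    exact ⟨jj, hjj.symm⟩
  | uw t' i => simp [Arc.head] at hh
  | uv t' i => simp [Arc.head] at hh
  | wv i => simp [Arc.head] at hh

lemma tail_is_w (hK : 0 < K) {s : ℕ} (hs : s + 1 < P + 1) {y : Arc P K}
    (ht : y.tail = some (⟨s, by omega⟩, true)) : ∃ j, y = psiW s hs j := by
  cases y with
  | e t' => simp [Arc.tail] at ht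
  | g t' i =>
    by_cases h0 : t'.val = 0
    · simp [Arc.tail, h0] at ht
    · simp only [Arc.tail, dif_neg h0] at ht
      have hval : t'.val - 1 = s := by simpa using ht
      have ht' : t' = (⟨s + 1, hs⟩ : Fin (P+1)) := Fin.ext (by simp; omega)
      subst ht'
      obtain ⟨jj, hjj, -⟩ := psiW_of_g hs i
      exact ⟨jj, hjj.symm⟩
  | a t' =>
    have h1 : t' = (⟨s, by omega⟩ : Fin (P+1)) := by simpa [Arc.tail] using ht
    subst h1
    obtain ⟨jj, hjj, -⟩ := psiW_of_a hK hs
    exact ⟨jj, hjj.symm⟩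
  | uw t' i => simp [Arc.tail] at ht
  | uv t' i => simp [Arc.tail] at ht
  | wv i =>
    have h1 : P = s := by simpa [Arc.tail] using ht
    omega

lemma forcing (hK2 : 2 ≤ K) (f : Fin K → Set (Arc P K))
    (hu : (⋃ i, f i) = Set.univ)
    (hd : ∀ i j, i ≠ j → Disjoint (f i) (f j))
    (hstr : ∀ i, (MD P K).StronglyConnected (f i)) :
    ∃ i₀ j₀ : Fin K, i₀ ≠ j₀ ∧
      P + 1 ≤ (MD P K).dOut (f i₀) none ∧ (MD P K).dOut (f j₀) none ≤ 1 := by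
  have hK : 0 < K := by omega
  -- each part contains an arc of each exactly-K family
  have hexC : ∀ (t : Fin (P+1)) (i : Fin K), ∃ j, psiC t j ∈ f i := by
    intro t i
    have hr := hstr i none (some (t, true))
    obtain ⟨y, hyS, hyt, hyh⟩ :=
      enters_set (U := {x : Vtx P | ∃ b, x = some (t, b)}) hr (by simp) ⟨true, rfl⟩
    obtain ⟨j, rfl⟩ := head_in_region hK (by simpa using hyt) (by simpa using hyh)
    exact ⟨j, hyS⟩
  have hexB : ∀ (t : Fin (P+1)) (i : Fin K), ∃ j, psiB t j ∈ f i := by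
    intro t i
    obtain ⟨y, hyS, hyh⟩ := last_arc (hstr i none (some (t, false))) (by simp)
    obtain ⟨j, rfl⟩ := head_is_u hK hyh
    exact ⟨j, hyS⟩
  have hexW : ∀ (s : ℕ) (hsP : s + 1 < P + 1) (i : Fin K), ∃ j, psiW s hsP j ∈ f i := by
    intro s hsP i
    obtain ⟨y, hyS, hyt⟩ := first_arc (hstr i (some (⟨s, by omega⟩, true)) none) (by simp)
    obtain ⟨j, rfl⟩ := tail_is_w hK hsP hyt
    exact ⟨j, hyS⟩
  have uC := fun t => keyUniq f hd (psiC t) (psiC_inj t) (fun i => hexC t i)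
  have uW := fun s hsP => keyUniq f hd (psiW s hsP) (psiW_inj s hsP) (fun i => hexW s hsP i)
  -- the part containing e 0
  have he0 : Arc.e (P := P) (K := K) ⟨0, Nat.succ_pos P⟩ ∈ ⋃ i, f i := by
    rw [hu]; trivial
  obtain ⟨i₀, h0⟩ := Set.mem_iUnion.mp he0
  -- all e t are in part i₀
  have chain : ∀ (s : ℕ) (hsP : s < P + 1), Arc.e (⟨s, hsP⟩ : Fin (P+1)) ∈ f i₀ := by
    intro s
    induction s with
    | zero => intro hsP; exact h0
    | succ s ih =>
      intro h
      have hsP : s < P + 1 := by omega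
      have hes := ih hsP
      have hnog : ∀ i : Fin (K-1), Arc.g (⟨s, hsP⟩ : Fin (P+1)) i ∉ f i₀ := by
        intro i hgmem
        obtain ⟨j1, hj1, hj1v⟩ := psiC_of_e hK (⟨s, hsP⟩ : Fin (P+1))
        obtain ⟨j2, hj2, hj2v⟩ := psiC_of_g (⟨s, hsP⟩ : Fin (P+1)) i
        have heq := uC (⟨s, hsP⟩ : Fin (P+1)) i₀ j1 j2
          (by rw [hj1]; exact hes) (by rw [hj2]; exact hgmem)
        have := congrArg Fin.val heq
        omega
      have ha : Arc.a (⟨s, hsP⟩ : Fin (P+1)) ∈ f i₀ := by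
        obtain ⟨j, hj⟩ := hexB (⟨s, hsP⟩ : Fin (P+1)) i₀
        by_cases hjv : j.val = 0
        · rw [show psiB (⟨s, hsP⟩ : Fin (P+1)) j = Arc.a ⟨s, hsP⟩ from by
            unfold psiB; rw [dif_pos hjv]] at hj
          exact hj
        · exfalso
          rw [show psiB (⟨s, hsP⟩ : Fin (P+1)) j
              = Arc.g ⟨s, hsP⟩ ⟨j.val - 1, by have := j.isLt; omega⟩ from by
            unfold psiB; rw [dif_neg hjv]] at hj
          exact hnog _ hj
      have hnog1 : ∀ i : Fin (K-1), Arc.g (⟨s + 1, h⟩ : Fin (P+1)) i ∉ f i₀ := by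
        intro i hgmem
        obtain ⟨j1, hj1, hj1v⟩ := psiW_of_a (P := P) hK h
        obtain ⟨j2, hj2, hj2v⟩ := psiW_of_g (P := P) h i
        have e1 : psiW s h j1 ∈ f i₀ := by rw [hj1]; exact ha
        have e2 : psiW s h j2 ∈ f i₀ := by rw [hj2]; exact hgmem
        have heq := uW s h i₀ j1 j2 e1 e2
        have := congrArg Fin.val heq
        omega
      obtain ⟨j, hj⟩ := hexC (⟨s + 1, h⟩ : Fin (P+1)) i₀
      by_cases hjv : j.val = 0
      · rw [show psiC (⟨s + 1, h⟩ : Fin (P+1)) j = Arc.e ⟨s + 1, h⟩ from by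
          unfold psiC; rw [dif_pos hjv]] at hj
        exact hj
      · exfalso
        rw [show psiC (⟨s + 1, h⟩ : Fin (P+1)) j
            = Arc.g ⟨s + 1, h⟩ ⟨j.val - 1, by have := j.isLt; omega⟩ from by
          unfold psiC; rw [dif_neg hjv]] at hj
        exact hnog1 _ hj
  -- choose a different part
  have h1K : 1 < K := hK2
  set j₀ : Fin K := if i₀.val = 0 then ⟨1, h1K⟩ else ⟨0, hK⟩ with hj₀def
  have hne : i₀ ≠ j₀ := by
    rw [hj₀def]
    split_ifs with hi0
    · intro hcon
      have hv : i₀.val = 1 := congrArg Fin.val hcon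
      omega
    · intro hcon
      exact hi0 (congrArg Fin.val hcon)
  refine ⟨i₀, j₀, hne, ?_, ?_⟩
  · -- lower bound on dOut of part i₀ at v
    unfold Multidigraph.dOut
    have hinj : Function.Injective (fun t : Fin (P+1) => Arc.e (P := P) (K := K) t) :=
      fun t t' hh => by simpa using hh
    have hsub : Set.range (fun t : Fin (P+1) => Arc.e (P := P) (K := K) t) ⊆
        {y : Arc P K | y ∈ f i₀ ∧ ((MD P K).ends y).1 = none} := by
      rintro y ⟨t, rfl⟩
      exact ⟨by simpa using chain t.val t.isLt, rfl⟩
    have hcard : (Set.range (fun t : Fin (P+1) => Arc.e (P := P) (K := K) t)).ncard = P + 1 := by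
      rw [← Set.image_univ, Set.ncard_image_of_injective _ hinj, Set.ncard_univ]
      simp
    calc P + 1 = _ := hcard.symm
      _ ≤ _ := Set.ncard_le_ncard hsub (Set.toFinite _)
  · -- upper bound on dOut of part j₀ at v
    have hss : {y : Arc P K | y ∈ f j₀ ∧ ((MD P K).ends y).1 = none}.Subsingleton := by
      rintro y ⟨hy, hyt⟩ y' ⟨hy', hyt'⟩
      simp only [MD_ends] at hyt hyt'
      obtain ⟨t, ii, rfl, ht0⟩ : ∃ t ii, y = Arc.g t ii ∧ t.val = 0 := by
        cases y with
        | e t =>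
          exact absurd hy (Set.disjoint_left.mp (hd i₀ j₀ hne)
            (by simpa using chain t.val t.isLt))
        | g t ii =>
          by_cases hz : t.val = 0
          · exact ⟨t, ii, rfl, hz⟩
          · simp [Arc.tail, hz] at hyt
        | a t => simp [Arc.tail] at hyt
        | uw t ii => simp [Arc.tail] at hyt
        | uv t ii => simp [Arc.tail] at hyt
        | wv ii => simp [Arc.tail] at hyt
      obtain ⟨t', ii', rfl, ht0'⟩ : ∃ t ii, y' = Arc.g t ii ∧ t.val = 0 := by
        cases y' with
        | e t =>
          exact absurd hy' (Set.disjoint_left.mp (hd i₀ j₀ hne)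
            (by simpa using chain t.val t.isLt))
        | g t ii =>
          by_cases hz : t.val = 0
          · exact ⟨t, ii, rfl, hz⟩
          · simp [Arc.tail, hz] at hyt'
        | a t => simp [Arc.tail] at hyt'
        | uw t ii => simp [Arc.tail] at hyt'
        | uv t ii => simp [Arc.tail] at hyt'
        | wv ii => simp [Arc.tail] at hyt'
      have htt : t = t' := Fin.ext (ht0.trans ht0'.symm)
      subst htt
      obtain ⟨j1, hj1, hj1v⟩ := psiC_of_g t ii
      obtain ⟨j2, hj2, hj2v⟩ := psiC_of_g t ii'
      have heq := uC t j₀ j1 j2 (by rw [hj1]; exact hy) (by rw [hj2]; exact hy')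
      have hvv := congrArg Fin.val heq
      have hiv : ii = ii' := Fin.ext (by omega)
      rw [hiv]
    unfold Multidigraph.dOut
    rcases hss.eq_empty_or_singleton with hE | ⟨z, hz⟩
    · rw [show {y : Arc P K | y ∈ f j₀ ∧ ((MD P K).ends y).1 = none} = ∅ from hE]
      simp
    · rw [show {y : Arc P K | y ∈ f j₀ ∧ ((MD P K).ends y).1 = none} = {z} from hz]
      simp

end Forcing2

section Transport

lemma reach_transport {V E V' E' : Type*} (D : Multidigraph V E) (eV : V ≃ V') (eE : E ≃ E')
    (S : Set E') (u w : V) :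
    (Multidigraph.mk fun x => (eV (D.ends (eE.symm x)).1, eV (D.ends (eE.symm x)).2)).Reach
        S (eV u) (eV w)
      ↔ D.Reach (⇑eE ⁻¹' S) u w := by
  constructor
  · intro h
    unfold Multidigraph.Reach at h ⊢
    have h2 := Relation.ReflTransGen.lift
      (p := fun a b => ∃ y ∈ ⇑eE ⁻¹' S, D.ends y = (a, b)) eV.symm ?_ _ _ h
    · simpa [Function.onFun] using h2
    · rintro a b ⟨x, hxS, hx⟩
      refine ⟨eE.symm x, by simpa using hxS, ?_⟩
      have h1 : eV (D.ends (eE.symm x)).1 = a := congrArg Prod.fst hx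
      have h2 : eV (D.ends (eE.symm x)).2 = b := congrArg Prod.snd hx
      rw [Prod.ext_iff]
      constructor <;> simp [← h1, ← h2]
  · intro h
    unfold Multidigraph.Reach at h ⊢
    have h2 := Relation.ReflTransGen.lift
      (p := fun a b => ∃ x ∈ S,
        (eV (D.ends (eE.symm x)).1, eV (D.ends (eE.symm x)).2) = (a, b)) eV ?_ _ _ h
    · exact h2
    · rintro a b ⟨y, hyS, hy⟩
      refine ⟨eE y, by simpa using hyS, ?_⟩
      simp [hy]

lemma dOut_transport {V E V' E' : Type*} (D : Multidigraph V E) (eV : V ≃ V') (eE : E ≃ E')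
    (S : Set E') (v : V) :
    (Multidigraph.mk fun x => (eV (D.ends (eE.symm x)).1, eV (D.ends (eE.symm x)).2)).dOut
        S (eV v)
      = D.dOut (⇑eE ⁻¹' S) v := by
  unfold Multidigraph.dOut
  have hset : {x : E' | x ∈ S ∧
        ((Multidigraph.mk fun x => (eV (D.ends (eE.symm x)).1, eV (D.ends (eE.symm x)).2)).ends
          x).1 = eV v}
      = ⇑eE '' {y : E | y ∈ ⇑eE ⁻¹' S ∧ (D.ends y).1 = v} := by
    rw [Equiv.image_eq_preimage_symm]
    ext x
    simp
  rw [hset, Set.ncard_image_of_injective _ eE.injective]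

end Transport


/-- **Theorem (Statement 18).** For every `k ≥ 2` and `c > 0` there is a
finite digraph which is the arc-disjoint union of `k` strongly connected
spanning subdigraphs such that in every decomposition into `k` strongly
connected spanning subdigraphs some two parts have out-degrees differing by
more than `c` at some vertex. -/
theorem strongly_connected_decompositions_unbalanced (k : ℕ) (hk : 2 ≤ k)
    (c : ℕ) (hc : 0 < c) :
    ∃ (n m : ℕ) (D : Multidigraph (Fin n) (Fin m)),
      (∃ f : Fin k → Set (Fin m), (⋃ i, f i) = Set.univ ∧
        (∀ i j, i ≠ j → Disjoint (f i) (f j)) ∧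
        ∀ i, D.StronglyConnected (f i)) ∧
      ∀ f : Fin k → Set (Fin m), (⋃ i, f i) = Set.univ →
        (∀ i j, i ≠ j → Disjoint (f i) (f j)) →
        (∀ i, D.StronglyConnected (f i)) →
        ∃ i j, i ≠ j ∧ ∃ v : Fin n,
          (c : ℤ) < |(D.dOut (f i) v : ℤ) - (D.dOut (f j) v : ℤ)| := by

  classical
  have hK : 0 < k := by omega
  set P := c + 1 with hPdef
  set eV := Fintype.equivFin (Vtx P) with heV
  set eE := Fintype.equivFin (Arc P k) with heE
  refine ⟨Fintype.card (Vtx P), Fintype.card (Arc P k),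
    ⟨fun x => (eV ((MD P k).ends (eE.symm x)).1, eV ((MD P k).ends (eE.symm x)).2)⟩, ?_, ?_⟩
  · -- existence of a decomposition
    obtain ⟨f, hfu, hfd, hfs⟩ := exists_decomp P k hK
    refine ⟨fun i => ⇑eE.symm ⁻¹' f i, ?_, ?_, ?_⟩
    · rw [← Set.preimage_iUnion, hfu, Set.preimage_univ]
    · exact fun i j hij => (hfd i j hij).preimage _
    · intro i a b
      have hpre : ⇑eE ⁻¹' (⇑eE.symm ⁻¹' f i) = f i := by ext y; simp
      have h0 : (MD P k).Reach (⇑eE ⁻¹' (⇑eE.symm ⁻¹' f i)) (eV.symm a) (eV.symm b) := by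
        rw [hpre]; exact hfs i (eV.symm a) (eV.symm b)
      have h1 := (reach_transport (MD P k) eV eE (⇑eE.symm ⁻¹' f i) (eV.symm a) (eV.symm b)).mpr h0
      rw [Equiv.apply_symm_apply, Equiv.apply_symm_apply] at h1
      exact h1
  · -- every decomposition is unbalanced
    intro F hFu hFd hFs
    have hu : (⋃ i, ⇑eE ⁻¹' F i) = Set.univ := by
      rw [← Set.preimage_iUnion, hFu, Set.preimage_univ]
    have hd : ∀ i j, i ≠ j → Disjoint (⇑eE ⁻¹' F i) (⇑eE ⁻¹' F j) :=
      fun i j hij => (hFd i j hij).preimage _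
    have hstr : ∀ i, (MD P k).StronglyConnected (⇑eE ⁻¹' F i) := by
      intro i u w
      exact (reach_transport (MD P k) eV eE (F i) u w).mp (hFs i (eV u) (eV w))
    obtain ⟨i₀, j₀, hne, h1, h2⟩ := forcing hk (fun i => ⇑eE ⁻¹' F i) hu hd hstr
    refine ⟨i₀, j₀, hne, eV none, ?_⟩
    rw [dOut_transport (MD P k) eV eE (F i₀) none, dOut_transport (MD P k) eV eE (F j₀) none]
    have hlow : (c : ℤ) < ((MD P k).dOut (⇑eE ⁻¹' F i₀) none : ℤ)
        - ((MD P k).dOut (⇑eE ⁻¹' F j₀) none : ℤ) := by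
      omega
    exact lt_of_lt_of_le hlow (le_abs_self _)
end

section
/- Let G be a finite 4-regular graph, let v be a vertex of G with neighbours v1, v2, v3, v4, and for i = 1, 2, 3 let Gi be the graph obtained from G by deleting v, adding two new vertices x and y, joining x to v1 and v_{i+1}, and joining y to the other two vertices among v1, v2, v3, v4. Then G contains two edge-disjoint Hamiltonian cycles if and only if at least one of G1, G2, G3 admits a perfectly balanced double tree decomposition, i.e., a partition of its edges into two spanning trees T1, T2 with d_{T1}(u) = d_{T2}(u) for every vertex u. -/
/-- A multigraph without loops: edges `E` with an endpoint map into unordered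
pairs of vertices, no edge being a loop. -/
structure Multigraph (V : Type*) (E : Type*) where
  ends : E → Sym2 V
  loopless : ∀ e, ¬ (ends e).IsDiag

namespace Multigraph

variable {V E : Type*}

/-- `a` and `b` are joined by an edge belonging to the edge set `S`. -/
def Adj (G : Multigraph V E) (S : Set E) (a b : V) : Prop :=
  ∃ e ∈ S, G.ends e = s(a, b)

/-- Reachability in the spanning subgraph with edge set `S`. -/
def Reachable (G : Multigraph V E) (S : Set E) (a b : V) : Prop :=
  Relation.ReflTransGen (G.Adj S) a b

/-- The spanning subgraph with edge set `S` is connected. -/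
def Connected (G : Multigraph V E) (S : Set E) : Prop :=
  ∀ a b : V, G.Reachable S a b

/-- The spanning subgraph with edge set `S` is acyclic: every edge of `S`
is a bridge of `S`. -/
def Acyclic (G : Multigraph V E) (S : Set E) : Prop :=
  ∀ e ∈ S, ∀ a b : V, G.ends e = s(a, b) → ¬ G.Reachable (S \ {e}) a b

/-- `S` is the edge set of a spanning tree: connected and acyclic. -/
def IsSpanningTree (G : Multigraph V E) (S : Set E) : Prop :=
  G.Connected S ∧ G.Acyclic S

/-- The edges of `S` incident to `v`. -/
def incEdges (G : Multigraph V E) (S : Set E) (v : V) : Set E :=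
  {e ∈ S | v ∈ G.ends e}

/-- The degree of `v` in the spanning subgraph with edge set `S`. -/
noncomputable def deg (G : Multigraph V E) (S : Set E) (v : V) : ℕ :=
  (G.incEdges S v).ncard

/-- `T1, T2` form a double tree decomposition of `G`: they partition the
edges of `G` and are both spanning trees. -/
def IsDTD (G : Multigraph V E) (T1 T2 : Set E) : Prop :=
  T1 ∪ T2 = Set.univ ∧ Disjoint T1 T2 ∧ G.IsSpanningTree T1 ∧ G.IsSpanningTree T2

/-- `G` is a double tree: the edge-disjoint union of two spanning trees. -/
def IsDoubleTree (G : Multigraph V E) : Prop :=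
  ∃ T1 T2, G.IsDTD T1 T2

/-- A decomposition into two spanning subgraphs is `c`-balanced if at each
vertex the two degrees differ by at most `c`. -/
def Balanced (G : Multigraph V E) (c : ℕ) (S1 S2 : Set E) : Prop :=
  ∀ v : V, |(G.deg S1 v : ℤ) - (G.deg S2 v : ℤ)| ≤ (c : ℤ)

end Multigraph

namespace Multigraph

variable {V E : Type*}

/-- The edge set `C` is a Hamiltonian cycle: connected and 2-regular. -/
def IsHamCycle (G : Multigraph V E) (C : Set E) : Prop :=
  G.Connected C ∧ ∀ v : V, G.deg C v = 2

/-- `G` has a perfectly balanced double tree decomposition. -/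
def HasPerfectlyBalancedDTD (G : Multigraph V E) : Prop :=
  ∃ T1 T2 : Set E, G.IsDTD T1 T2 ∧ ∀ v : V, G.deg T1 v = G.deg T2 v

/-- The graph obtained from `G` by splitting a vertex `v` into `x := Sum.inl v`
and a new vertex `y := Sum.inr ()`: the edges `ea, eb` (originally joining `v`
to `wa, wb`) are redirected to join `y` to `wa, wb`; all other edges are kept.
In particular all remaining edges of `v` stay at `x`. -/
def splitVertex [DecidableEq E] (G : Multigraph V E) (ea eb : E) (wa wb : V) :
    Multigraph (V ⊕ Unit) E where
  ends e :=
    if e = ea then s(Sum.inr (), Sum.inl wa)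
    else if e = eb then s(Sum.inr (), Sum.inl wb)
    else Sym2.map Sum.inl (G.ends e)
  loopless e := by
    split_ifs with h1 h2
    · simp [Sym2.mk_isDiag_iff]
    · simp [Sym2.mk_isDiag_iff]
    · intro hd
      exact G.loopless e ((Sym2.isDiag_map Sum.inl_injective).mp hd)

end Multigraph

namespace Multigraph

variable {V E : Type*}

variable {G : Multigraph V E} {S S' : Set E} {a b c : V}

lemma adj_symm (h : G.Adj S a b) : G.Adj S b a := by
  obtain ⟨e, he, h⟩ := h; exact ⟨e, he, h.trans Sym2.eq_swap⟩

lemma adj_mono (hs : S ⊆ S') (h : G.Adj S a b) : G.Adj S' a b := by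
  obtain ⟨e, he, h⟩ := h; exact ⟨e, hs he, h⟩

lemma reach_symm (h : G.Reachable S a b) : G.Reachable S b a :=
  by
  induction h with
  | refl => exact Relation.ReflTransGen.refl
  | tail _ hadj ih => exact Relation.ReflTransGen.head (adj_symm hadj) ih

lemma reach_trans (h : G.Reachable S a b) (h' : G.Reachable S b c) : G.Reachable S a c :=
  Relation.ReflTransGen.trans h h'

lemma reach_mono (hs : S ⊆ S') (h : G.Reachable S a b) : G.Reachable S' a b :=
  Relation.ReflTransGen.mono (fun _ _ => adj_mono hs) _ _ h

lemma adj_reach (h : G.Adj S a b) : G.Reachable S a b :=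
  Relation.ReflTransGen.single h

/-- reach-class of `a`. -/
def cls (G : Multigraph V E) (S : Set E) (a : V) : Set V := {b | G.Reachable S a b}

lemma cls_closed (hb : b ∈ G.cls S a) (h : G.Adj S b c) : c ∈ G.cls S a :=
  Relation.ReflTransGen.tail hb h

lemma cls_eq_of_mem (hb : b ∈ G.cls S a) : G.cls S b = G.cls S a := by
  ext c; exact ⟨fun h => reach_trans hb h, fun h => reach_trans (reach_symm hb) h⟩

lemma cls_disjoint_of_not_mem (hb : b ∉ G.cls S a) : Disjoint (G.cls S a) (G.cls S b) := by
  rw [Set.disjoint_left]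
  intro c hca hcb
  exact hb (reach_trans hca (reach_symm hcb))

/-- edges of `S` with all endpoints inside `K`. -/
def within (G : Multigraph V E) (S : Set E) (K : Set V) : Set E :=
  {e ∈ S | ∀ u ∈ G.ends e, u ∈ K}

lemma within_subset : G.within S K ⊆ S := fun _ h => h.1

end Multigraph

namespace Multigraph
variable {V E : Type*} {G : Multigraph V E} {S : Set E} {a b : V}

lemma cls_subset_singleton_empty : G.cls (∅ : Set E) a ⊆ {a} := by
  intro b hb
  induction hb with
  | refl => rfl
  | tail _ h ih => obtain ⟨e, he, -⟩ := h; exact absurd he (Set.notMem_empty e)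

lemma cls_unusable {h : E} {S' : Set E} {p q : V} (hpq : G.ends h = s(p, q))
    (hp : p ∉ G.cls S' a) (hq : q ∉ G.cls S' a) :
    G.cls (insert h S') a = G.cls S' a := by
  apply Set.Subset.antisymm
  · intro b hb
    induction hb with
    | refl => exact Relation.ReflTransGen.refl
    | tail _ hadj ih =>
      obtain ⟨g, hg, hends⟩ := hadj
      rcases Set.mem_insert_iff.mp hg with rfl | hg'
      · rw [hpq] at hends
        rcases Sym2.eq_iff.mp hends with ⟨rfl, rfl⟩ | ⟨rfl, rfl⟩
        · exact absurd ih hp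
        · exact absurd ih hq
      · exact cls_closed ih ⟨g, hg', hends⟩
  · exact fun b hb => reach_mono (Set.subset_insert _ _) hb

lemma cls_usable {h : E} {S' : Set E} {p q : V} (hpq : G.ends h = s(p, q))
    (hp : p ∈ G.cls S' a) :
    G.cls (insert h S') a ⊆ G.cls S' a ∪ G.cls S' q := by
  intro b hb
  induction hb with
  | refl => exact Or.inl Relation.ReflTransGen.refl
  | tail _ hadj ih =>
    obtain ⟨g, hg, hends⟩ := hadj
    rcases Set.mem_insert_iff.mp hg with rfl | hg'
    · rw [hpq] at hends
      rcases Sym2.eq_iff.mp hends with ⟨rfl, rfl⟩ | ⟨rfl, rfl⟩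
      · exact Or.inr Relation.ReflTransGen.refl
      · exact Or.inl hp
    · rcases ih with ih | ih
      · exact Or.inl (cls_closed ih ⟨g, hg', hends⟩)
      · exact Or.inr (cls_closed ih ⟨g, hg', hends⟩)

lemma sym2_exists (z : Sym2 V) : ∃ p q : V, z = s(p, q) := by
  induction z using Sym2.ind with
  | _ x y => exact ⟨x, y, rfl⟩

lemma exists_mem_ends (G : Multigraph V E) (e : E) : ∃ p q : V, G.ends e = s(p, q) :=
  sym2_exists _

lemma within_mono_K {K K' : Set V} (h : K ⊆ K') : G.within S K ⊆ G.within S K' :=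
  fun e ⟨he, hK⟩ => ⟨he, fun u hu => h (hK u hu)⟩

lemma within_mono_S {S' : Set E} {K : Set V} (h : S ⊆ S') : G.within S K ⊆ G.within S' K :=
  fun e ⟨he, hK⟩ => ⟨h he, hK⟩

lemma within_disjoint {K K' : Set V} (h : Disjoint K K') :
    Disjoint (G.within S K) (G.within S K') := by
  rw [Set.disjoint_left]
  rintro e ⟨he, hK⟩ ⟨-, hK'⟩
  obtain ⟨p, q, hpq⟩ := exists_mem_ends G e
  have hp : p ∈ G.ends e := by rw [hpq]; exact Sym2.mem_mk_left p q
  exact Set.disjoint_left.mp h (hK p hp) (hK' p hp)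

/-- Key bound: a reach-class has at most one more vertex than internal edges. -/
lemma cls_ncard_le_within [Finite V] (G : Multigraph V E) (S : Set E) (hS : S.Finite) :
    ∀ a : V, (G.cls S a).ncard ≤ (G.within S (G.cls S a)).ncard + 1 := by
  refine Set.Finite.induction_on (motive := fun S _ => ∀ a : V, (G.cls S a).ncard ≤ (G.within S (G.cls S a)).ncard + 1) S hS (fun a => ?_) ?_
  · calc (G.cls (∅ : Set E) a).ncard ≤ ({a} : Set V).ncard :=
          Set.ncard_le_ncard cls_subset_singleton_empty (Set.finite_singleton a)
      _ = 1 := Set.ncard_singleton a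
      _ ≤ _ := le_add_self
  · rintro h S' hh hS' IH a
    obtain ⟨p, q, hpq⟩ := exists_mem_ends G h
    -- helper applying to (p,q) or (q,p)
    have key : ∀ p q : V, G.ends h = s(p, q) → p ∈ G.cls S' a →
        (G.cls (insert h S') a).ncard ≤ (G.within (insert h S') (G.cls (insert h S') a)).ncard + 1 := by
      intro p q hpq hp
      have hqS : q ∈ G.cls (insert h S') a := by
        refine cls_closed (reach_mono (Set.subset_insert _ _) hp) ?_
        exact ⟨h, Set.mem_insert _ _, hpq⟩
      by_cases hq : q ∈ G.cls S' a
      · -- class unchanged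
        have hsub : G.cls (insert h S') a ⊆ G.cls S' a := by
          have := cls_usable (a := a) hpq hp
          rwa [cls_eq_of_mem hq, Set.union_self] at this
        have heq : G.cls (insert h S') a = G.cls S' a :=
          Set.Subset.antisymm hsub (fun b hb => reach_mono (Set.subset_insert _ _) hb)
        rw [heq]
        calc (G.cls S' a).ncard ≤ (G.within S' (G.cls S' a)).ncard + 1 := IH a
          _ ≤ (G.within (insert h S') (G.cls S' a)).ncard + 1 := by
              exact Nat.add_le_add_right (Set.ncard_le_ncard (within_mono_S (Set.subset_insert _ _)) (Set.Finite.subset (hS'.insert h) within_subset)) 1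
      · -- class is union of two old classes
        have heq : G.cls (insert h S') a = G.cls S' a ∪ G.cls S' q := by
          apply Set.Subset.antisymm (cls_usable hpq hp)
          apply Set.union_subset (fun b hb => reach_mono (Set.subset_insert _ _) hb)
          intro b hb
          exact reach_trans hqS (reach_mono (Set.subset_insert _ _) hb)
        have hdisj : Disjoint (G.cls S' a) (G.cls S' q) := cls_disjoint_of_not_mem hq
        have hfin : ∀ K : Set V, K.Finite := fun K => Set.toFinite K
        have hcard : (G.cls (insert h S') a).ncard = (G.cls S' a).ncard + (G.cls S' q).ncard := by
          rw [heq]; exact Set.ncard_union_eq hdisj (hfin _) (hfin _)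
        -- within edges
        set W1 := G.within S' (G.cls S' a)
        set W2 := G.within S' (G.cls S' q)
        have hW1fin : W1.Finite := hS'.subset within_subset
        have hW2fin : W2.Finite := hS'.subset within_subset
        have hWdisj : Disjoint W1 W2 := within_disjoint hdisj
        have hhW : h ∉ W1 ∪ W2 := fun hc => hc.elim (fun h1 => hh (within_subset h1)) (fun h1 => hh (within_subset h1))
        have hsubW : insert h (W1 ∪ W2) ⊆ G.within (insert h S') (G.cls (insert h S') a) := by
          rintro g (rfl | hg | hg)
          · refine ⟨Set.mem_insert _ _, ?_⟩
            intro u hu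
            rw [hpq, Sym2.mem_iff] at hu
            rcases hu with rfl | rfl
            · exact reach_mono (Set.subset_insert _ _) hp
            · exact hqS
          · exact ⟨Set.mem_insert_of_mem _ hg.1, fun u hu => by
              rw [heq]; exact Or.inl (hg.2 u hu)⟩
          · exact ⟨Set.mem_insert_of_mem _ hg.1, fun u hu => by
              rw [heq]; exact Or.inr (hg.2 u hu)⟩
        have hWcard : W1.ncard + W2.ncard + 1 ≤ (G.within (insert h S') (G.cls (insert h S') a)).ncard := by
          have h1 : (insert h (W1 ∪ W2)).ncard = (W1 ∪ W2).ncard + 1 :=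
            Set.ncard_insert_of_notMem hhW ((hW1fin.union hW2fin))
          have h2 : (W1 ∪ W2).ncard = W1.ncard + W2.ncard := Set.ncard_union_eq hWdisj hW1fin hW2fin
          calc W1.ncard + W2.ncard + 1 = (insert h (W1 ∪ W2)).ncard := by rw [h1, h2]
            _ ≤ _ := Set.ncard_le_ncard hsubW (Set.Finite.subset (hS'.insert h) within_subset)
        calc (G.cls (insert h S') a).ncard = (G.cls S' a).ncard + (G.cls S' q).ncard := hcard
          _ ≤ (W1.ncard + 1) + (W2.ncard + 1) := add_le_add (IH a) (IH q)
          _ = (W1.ncard + W2.ncard + 1) + 1 := by ring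
          _ ≤ _ := Nat.add_le_add_right hWcard 1
    by_cases hp : p ∈ G.cls S' a
    · exact key p q hpq hp
    · by_cases hq : q ∈ G.cls S' a
      · exact key q p (hpq.trans Sym2.eq_swap) hq
      · rw [cls_unusable hpq hp hq]
        calc (G.cls S' a).ncard ≤ (G.within S' (G.cls S' a)).ncard + 1 := IH a
          _ ≤ _ := Nat.add_le_add_right (Set.ncard_le_ncard (within_mono_S (Set.subset_insert _ _)) (Set.Finite.subset (hS'.insert h) within_subset)) 1

/-- A connected spanning edge set has at least `|V| - 1` edges. -/
lemma connected_card_le [Finite V] [Finite E] (G : Multigraph V E) (S : Set E)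
    (hc : G.Connected S) : Nat.card V ≤ S.ncard + 1 := by
  cases isEmpty_or_nonempty V with
  | inl h => simp [Nat.card_of_isEmpty]
  | inr h =>
    obtain ⟨a⟩ := h
    have huniv : G.cls S a = Set.univ := Set.eq_univ_of_forall (fun b => hc a b)
    have := cls_ncard_le_within G S (Set.toFinite S) a
    rw [huniv] at this
    calc Nat.card V = (Set.univ : Set V).ncard := (Set.ncard_univ V).symm
      _ ≤ (G.within S Set.univ).ncard + 1 := this
      _ ≤ S.ncard + 1 := Nat.add_le_add_right (Set.ncard_le_ncard within_subset (Set.toFinite S)) 1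

end Multigraph

namespace Multigraph
variable {V E : Type*} {G : Multigraph V E}

/-- Handshake lemma relative to a set `K` of vertices closed under `S`-adjacency. -/
lemma handshake [Finite V] [Finite E] (G : Multigraph V E) (S : Set E) (K : Set V)
    (hcl : ∀ e ∈ S, ∀ u w : V, G.ends e = s(u, w) → u ∈ K → w ∈ K) :
    ∑ w ∈ (Set.toFinite K).toFinset, G.deg S w = 2 * (G.within S K).ncard := by
  classical
  have : Fintype V := Fintype.ofFinite V
  have : Fintype E := Fintype.ofFinite E
  have hdeg : ∀ w : V, G.deg S w = ∑ e : E, (if e ∈ S ∧ w ∈ G.ends e then 1 else 0) := by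
    intro w
    rw [deg, Set.ncard_eq_toFinset_card']
    rw [show (G.incEdges S w).toFinset = Finset.univ.filter (fun e => e ∈ S ∧ w ∈ G.ends e) by
      ext e; rw [Set.mem_toFinset]; simp [incEdges]]
    rw [Finset.card_filter]
  have hinner : ∀ e : E, (∑ w ∈ (Set.toFinite K).toFinset, if e ∈ S ∧ w ∈ G.ends e then 1 else 0)
      = if e ∈ G.within S K then 2 else 0 := by
    intro e
    by_cases heS : e ∈ S
    · obtain ⟨u, w', huw⟩ := exists_mem_ends G e
      have hne : u ≠ w' := by
        intro hc
        exact G.loopless e (by rw [huw, hc]; exact Sym2.isDiag_iff_proj_eq |>.mpr rfl)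
      by_cases hu : u ∈ K
      · have hw' : w' ∈ K := hcl e heS u w' huw hu
        have hwithin : e ∈ G.within S K := by
          refine ⟨heS, fun z hz => ?_⟩
          rw [huw, Sym2.mem_iff] at hz
          rcases hz with rfl | rfl
          · exact hu
          · exact hw'
        rw [if_pos hwithin]
        have : ∀ w ∈ (Set.toFinite K).toFinset, (if e ∈ S ∧ w ∈ G.ends e then 1 else 0)
            = (if w ∈ ({u, w'} : Finset V) then 1 else 0) := by
          intro w _
          simp only [heS, true_and, huw, Sym2.mem_iff, Finset.mem_insert, Finset.mem_singleton]
        rw [Finset.sum_congr rfl this, Finset.sum_ite_mem, Finset.inter_comm]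
        have hsub : ({u, w'} : Finset V) ⊆ (Set.toFinite K).toFinset := by
          intro z hz
          rcases Finset.mem_insert.mp hz with rfl | hz
          · simpa using hu
          · simp only [Finset.mem_singleton] at hz
            subst hz
            simpa using hw' 
        rw [Finset.inter_eq_left.mpr hsub]
        simp [Finset.card_insert_of_notMem, hne]
      · have hw' : w' ∉ K := fun hc => hu (hcl e heS w' u (huw.trans Sym2.eq_swap) hc)
        have hnw : e ∉ G.within S K := by
          rintro ⟨-, hall⟩
          exact hu (hall u (by rw [huw]; exact Sym2.mem_mk_left u w'))
        rw [if_neg hnw]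
        refine Finset.sum_eq_zero (fun w hw => ?_)
        rw [if_neg]
        rintro ⟨-, hmem⟩
        rw [huw, Sym2.mem_iff] at hmem
        rcases hmem with rfl | rfl
        · exact hu (by simpa using hw)
        · exact hw' (by simpa using hw)
    · have hnw : e ∉ G.within S K := fun hc => heS hc.1
      rw [if_neg hnw]
      exact Finset.sum_eq_zero (fun w _ => if_neg (fun hc => heS hc.1))
  calc ∑ w ∈ (Set.toFinite K).toFinset, G.deg S w
      = ∑ w ∈ (Set.toFinite K).toFinset, ∑ e : E, (if e ∈ S ∧ w ∈ G.ends e then 1 else 0) := by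
        exact Finset.sum_congr rfl (fun w _ => hdeg w)
    _ = ∑ e : E, ∑ w ∈ (Set.toFinite K).toFinset, (if e ∈ S ∧ w ∈ G.ends e then 1 else 0) :=
        Finset.sum_comm
    _ = ∑ e : E, (if e ∈ G.within S K then 2 else 0) := Finset.sum_congr rfl (fun e _ => hinner e)
    _ = 2 * (G.within S K).ncard := by
        have hc : (G.within S K).ncard = (Finset.univ.filter (· ∈ G.within S K)).card := by
          rw [Set.ncard_eq_toFinset_card']
          congr 1
          ext e
          simp
        rw [hc, ← Finset.sum_filter, Finset.sum_const, smul_eq_mul, mul_comm]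

end Multigraph



namespace Multigraph
variable {V E : Type*}

section Split
variable [DecidableEq E] {G : Multigraph V E} {v wa wb : V} {ea eb : E}

lemma ends_of_ne (hwa : G.ends ea = s(v, wa)) : v ≠ wa := by
  intro hc
  exact G.loopless ea (by rw [hwa, ← hc]; exact Sym2.mk_isDiag_iff.mpr rfl)

lemma split_ends_a : (G.splitVertex ea eb wa wb).ends ea = s(Sum.inr (), Sum.inl wa) := by
  simp [splitVertex]

lemma split_ends_b (hab : ea ≠ eb) :
    (G.splitVertex ea eb wa wb).ends eb = s(Sum.inr (), Sum.inl wb) := by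
  simp [splitVertex, hab.symm]

lemma split_ends_kept {g : E} (h1 : g ≠ ea) (h2 : g ≠ eb) :
    (G.splitVertex ea eb wa wb).ends g = Sym2.map Sum.inl (G.ends g) := by
  simp [splitVertex, h1, h2]

lemma split_inc_inl (hab : ea ≠ eb) (hwa : G.ends ea = s(v, wa)) (hwb : G.ends eb = s(v, wb))
    (S : Set E) {w : V} (hw : w ≠ v) :
    (G.splitVertex ea eb wa wb).incEdges S (Sum.inl w) = G.incEdges S w := by
  ext g
  simp only [incEdges, Set.mem_setOf_eq, and_congr_right_iff]
  intro hgS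
  by_cases h1 : g = ea
  · subst h1
    rw [split_ends_a, hwa]
    simp [Sym2.mem_iff, hw]
  · by_cases h2 : g = eb
    · subst h2
      rw [split_ends_b hab, hwb]
      simp [Sym2.mem_iff, hw]
    · rw [split_ends_kept h1 h2]
      simp [Sym2.mem_map]

lemma split_inc_x (hab : ea ≠ eb) (hwa : G.ends ea = s(v, wa)) (hwb : G.ends eb = s(v, wb))
    (S : Set E) :
    (G.splitVertex ea eb wa wb).incEdges S (Sum.inl v) = G.incEdges S v \ {ea, eb} := by
  have hva := ends_of_ne hwa
  have hvb := ends_of_ne hwb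
  ext g
  simp only [incEdges, Set.mem_setOf_eq, Set.mem_diff, Set.mem_insert_iff, Set.mem_singleton_iff]
  by_cases h1 : g = ea
  · subst h1
    rw [split_ends_a]
    simp [Sym2.mem_iff, hva]
  · by_cases h2 : g = eb
    · subst h2
      rw [split_ends_b hab]
      simp [Sym2.mem_iff, hvb]
    · rw [split_ends_kept h1 h2]
      simp [Sym2.mem_map, h1, h2]

lemma split_inc_y (hab : ea ≠ eb) (hwa : G.ends ea = s(v, wa)) (hwb : G.ends eb = s(v, wb))
    (S : Set E) :
    (G.splitVertex ea eb wa wb).incEdges S (Sum.inr ()) = S ∩ {ea, eb} := by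
  ext g
  simp only [incEdges, Set.mem_setOf_eq, Set.mem_inter_iff, Set.mem_insert_iff,
    Set.mem_singleton_iff, and_congr_right_iff]
  intro hgS
  by_cases h1 : g = ea
  · subst h1
    rw [split_ends_a]
    simp [Sym2.mem_iff]
  · by_cases h2 : g = eb
    · subst h2
      rw [split_ends_b hab]
      simp [Sym2.mem_iff]
    · rw [split_ends_kept h1 h2]
      simp [Sym2.mem_map, h1, h2]

lemma split_inc_v (hab : ea ≠ eb) (hwa : G.ends ea = s(v, wa)) (hwb : G.ends eb = s(v, wb))
    (S : Set E) :
    G.incEdges S v =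
      (G.splitVertex ea eb wa wb).incEdges S (Sum.inl v) ∪
      (G.splitVertex ea eb wa wb).incEdges S (Sum.inr ()) := by
  rw [split_inc_x hab hwa hwb, split_inc_y hab hwa hwb]
  ext g
  simp only [Set.mem_union, Set.mem_diff, Set.mem_inter_iff, incEdges, Set.mem_setOf_eq,
    Set.mem_insert_iff, Set.mem_singleton_iff]
  constructor
  · rintro ⟨hgS, hgv⟩
    by_cases h : g = ea ∨ g = eb
    · exact Or.inr ⟨hgS, h⟩
    · exact Or.inl ⟨⟨hgS, hgv⟩, h⟩
  · rintro (⟨⟨hgS, hgv⟩, -⟩ | ⟨hgS, h⟩)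
    · exact ⟨hgS, hgv⟩
    · rcases h with rfl | rfl
      · exact ⟨hgS, by rw [hwa]; exact Sym2.mem_mk_left _ _⟩
      · exact ⟨hgS, by rw [hwb]; exact Sym2.mem_mk_left _ _⟩

lemma split_map_collapse (hab : ea ≠ eb) (hwa : G.ends ea = s(v, wa)) (hwb : G.ends eb = s(v, wb)) (g : E) :
    Sym2.map (Sum.elim id fun _ => v) ((G.splitVertex ea eb wa wb).ends g) = G.ends g := by
  by_cases h1 : g = ea
  · subst h1
    rw [split_ends_a, Sym2.map_pair_eq, hwa]
    simp [Sym2.eq_swap]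
  · by_cases h2 : g = eb
    · subst h2
      rw [split_ends_b hab, Sym2.map_pair_eq, hwb]
      simp [Sym2.eq_swap]
    · rw [split_ends_kept h1 h2, Sym2.map_map]
      simp

lemma split_reach_down (hab : ea ≠ eb) (hwa : G.ends ea = s(v, wa)) (hwb : G.ends eb = s(v, wb))
    {S : Set E} {z z' : V ⊕ Unit}
    (h : (G.splitVertex ea eb wa wb).Reachable S z z') :
    G.Reachable S (Sum.elim id (fun _ => v) z) (Sum.elim id (fun _ => v) z') := by
  induction h with
  | refl => exact Relation.ReflTransGen.refl
  | tail _ hadj ih =>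
    obtain ⟨g, hg, hends⟩ := hadj
    refine Relation.ReflTransGen.tail ih ⟨g, hg, ?_⟩
    rw [← split_map_collapse hab hwa hwb (ea := ea) (eb := eb) g, hends, Sym2.map_pair_eq]

lemma split_adj_up {S : Set E} {g : E} {c d : V} (hg : g ∈ S) (h1 : g ≠ ea) (h2 : g ≠ eb)
    (hends : G.ends g = s(c, d)) :
    (G.splitVertex ea eb wa wb).Adj S (Sum.inl c) (Sum.inl d) :=
  ⟨g, hg, by rw [split_ends_kept h1 h2, hends, Sym2.map_pair_eq]⟩

end Split
end Multigraph

namespace Multigraph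
variable {V E : Type*}

/-- Full handshake. -/
lemma handshake_univ [Finite V] [Finite E] (G : Multigraph V E) (S : Set E) :
    ∑ w ∈ (Set.toFinite (Set.univ : Set V)).toFinset, G.deg S w = 2 * S.ncard := by
  have h := G.handshake S Set.univ (fun _ _ _ _ _ _ => Set.mem_univ _)
  rw [h]
  congr 1
  have heq : G.within S Set.univ = S :=
    Set.Subset.antisymm within_subset (fun g hg => ⟨hg, fun _ _ => Set.mem_univ _⟩)
  rw [heq]

/-- Connected survives removing a redundant edge. -/
lemma connected_diff {G : Multigraph V E} {S : Set E} {h : E} {p q : V}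
    (hc : G.Connected S) (hends : G.ends h = s(p, q))
    (hr : G.Reachable (S \ {h}) p q) : G.Connected (S \ {h}) := by
  intro a b
  have hab := hc a b
  induction hab with
  | refl => exact Relation.ReflTransGen.refl
  | tail _ hadj ih =>
    obtain ⟨g, hg, hends'⟩ := hadj
    by_cases hgh : g = h
    · subst hgh
      rw [hends] at hends'
      rcases Sym2.eq_iff.mp hends'.symm with ⟨rfl, rfl⟩ | ⟨rfl, rfl⟩
      · exact reach_trans ih hr
      · exact reach_trans ih (reach_symm hr)
    · exact Relation.ReflTransGen.tail ih ⟨g, ⟨hg, hgh⟩, hends'⟩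

section Split
variable [DecidableEq E] {G : Multigraph V E} {v wa wb : V} {ea eb : E}

/-- Forward core: a Hamiltonian cycle of `G` whose two edges at `v` are split
between `x` and `y` becomes a spanning tree of the split graph, with leaf
degrees at `x` and `y`. -/
lemma ham_to_tree [Finite V] [Finite E]
    (hab : ea ≠ eb) (hwa : G.ends ea = s(v, wa)) (hwb : G.ends eb = s(v, wb))
    {S : Set E} {e f : E}
    (hconn : G.Connected S) (hdeg2 : ∀ w : V, G.deg S w = 2)
    (hinc : G.incEdges S v = {e, f}) (hef : e ≠ f)
    (hea : e ≠ ea) (heb : e ≠ eb) (hf : f = ea ∨ f = eb) :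
    (G.splitVertex ea eb wa wb).IsSpanningTree S ∧
    (G.splitVertex ea eb wa wb).deg S (Sum.inl v) = 1 ∧
    (G.splitVertex ea eb wa wb).deg S (Sum.inr ()) = 1 ∧
    (∀ w : V, w ≠ v → (G.splitVertex ea eb wa wb).deg S (Sum.inl w) = 2) := by
  classical
  set Gi := G.splitVertex ea eb wa wb with hGi
  have hfS : f ∈ S := (hinc ▸ (Set.mem_insert_iff.mpr (Or.inr rfl)) : f ∈ G.incEdges S v).1
  have heS : e ∈ S := (hinc ▸ (Set.mem_insert_iff.mpr (Or.inl rfl)) : e ∈ G.incEdges S v).1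
  -- the endpoint of f, and its split ends
  obtain ⟨wf, hGf, hif⟩ : ∃ wf : V, G.ends f = s(v, wf) ∧
      Gi.ends f = s(Sum.inr (), Sum.inl wf) := by
    rcases hf with rfl | rfl
    · exact ⟨wa, hwa, split_ends_a⟩
    · exact ⟨wb, hwb, split_ends_b hab⟩
  -- S ∩ {ea, eb} = {f}
  have hSab : S ∩ {ea, eb} = {f} := by
    ext g
    simp only [Set.mem_inter_iff, Set.mem_insert_iff, Set.mem_singleton_iff]
    constructor
    · rintro ⟨hgS, hg⟩
      have hginc : g ∈ G.incEdges S v := by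
        refine ⟨hgS, ?_⟩
        rcases hg with rfl | rfl
        · rw [hwa]; exact Sym2.mem_mk_left _ _
        · rw [hwb]; exact Sym2.mem_mk_left _ _
      rw [hinc] at hginc
      rcases hginc with rfl | rfl
      · rcases hg with rfl | rfl
        · exact absurd rfl hea
        · exact absurd rfl heb
      · rfl
    · rintro rfl
      exact ⟨hfS, hf⟩
  -- degree computations
  have hdegx : Gi.deg S (Sum.inl v) = 1 := by
    rw [deg, hGi, split_inc_x hab hwa hwb, hinc]
    rw [show ({e, f} : Set E) \ {ea, eb} = {e} by
      ext g
      simp only [Set.mem_diff, Set.mem_insert_iff, Set.mem_singleton_iff]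
      constructor
      · rintro ⟨rfl | rfl, hg⟩
        · rfl
        · exact absurd hf hg
      · rintro rfl
        exact ⟨Or.inl rfl, by rintro (rfl | rfl) <;> [exact hea rfl; exact heb rfl]⟩]
    exact Set.ncard_singleton e
  have hdegy : Gi.deg S (Sum.inr ()) = 1 := by
    rw [deg, hGi, split_inc_y hab hwa hwb, hSab]
    exact Set.ncard_singleton f
  have hdegw : ∀ w : V, w ≠ v → Gi.deg S (Sum.inl w) = 2 := by
    intro w hw
    rw [deg, hGi, split_inc_inl hab hwa hwb S hw]
    exact hdeg2 w
  -- step 1 : reach from x or y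
  have step1 : ∀ b : V, Gi.Reachable S (Sum.inl v) (Sum.inl b) ∨
      Gi.Reachable S (Sum.inr ()) (Sum.inl b) := by
    intro b
    have hvb := hconn v b
    clear hdeg2
    induction hvb with
    | refl => exact Or.inl Relation.ReflTransGen.refl
    | @tail c b _ hadj ih =>
      obtain ⟨g, hg, hends⟩ := hadj
      by_cases hgab : g = ea ∨ g = eb
      · have hgf : g = f := by
          have : g ∈ S ∩ {ea, eb} := ⟨hg, by
            rcases hgab with h | h
            · exact Set.mem_insert_iff.mpr (Or.inl h)
            · exact Set.mem_insert_iff.mpr (Or.inr h)⟩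
          rw [hSab] at this
          exact this
        subst hgf
        rw [hGf] at hends
        rcases Sym2.eq_iff.mp hends with ⟨hc, hb⟩ | ⟨hb, hc⟩
        · subst hb
          exact Or.inr (adj_reach ⟨g, hg, hif⟩)
        · subst hb
          exact Or.inl Relation.ReflTransGen.refl
      · push_neg at hgab
        have hadj' : Gi.Adj S (Sum.inl c) (Sum.inl b) := split_adj_up hg hgab.1 hgab.2 hends
        rcases ih with ih | ih
        · exact Or.inl (Relation.ReflTransGen.tail ih hadj')
        · exact Or.inr (Relation.ReflTransGen.tail ih hadj')
  -- step 2 : x reaches y (parity argument)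
  have step2 : Gi.Reachable S (Sum.inl v) (Sum.inr ()) := by
    by_contra hxy
    set K := Gi.cls S (Sum.inl v) with hK
    have hyK : (Sum.inr () : V ⊕ Unit) ∉ K := hxy
    have hcl : ∀ g ∈ S, ∀ u w : V ⊕ Unit, Gi.ends g = s(u, w) → u ∈ K → w ∈ K :=
      fun g hg u w hends hu => cls_closed hu ⟨g, hg, hends⟩
    have hhs := Gi.handshake S K hcl
    set Kf := (Set.toFinite K).toFinset with hKf
    have hxK : (Sum.inl v : V ⊕ Unit) ∈ Kf := by
      simp only [hKf, Set.Finite.mem_toFinset]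
      exact Relation.ReflTransGen.refl
    have hsum : ∑ z ∈ Kf, Gi.deg S z = (∑ z ∈ Kf.erase (Sum.inl v), Gi.deg S z) + 1 := by
      rw [← Finset.sum_erase_add _ _ hxK, hdegx]
    have herase : ∀ z ∈ Kf.erase (Sum.inl v), Gi.deg S z = 2 := by
      intro z hz
      have hzK : z ∈ K := by
        have := Finset.mem_of_mem_erase hz
        simpa [hKf] using this
      have hzx : z ≠ Sum.inl v := Finset.ne_of_mem_erase hz
      rcases z with w | u
      · have hwv : w ≠ v := fun hc => hzx (by rw [hc])
        exact hdegw w hwv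
      · exact absurd (show (Sum.inr () : V ⊕ Unit) ∈ K from by cases u; exact hzK) hyK
    rw [Finset.sum_congr rfl herase, Finset.sum_const, smul_eq_mul] at hsum
    rw [hsum] at hhs
    omega
  -- connectivity
  have hallreach : ∀ z : V ⊕ Unit, Gi.Reachable S (Sum.inl v) z := by
    intro z
    rcases z with b | u
    · rcases step1 b with h | h
      · exact h
      · exact reach_trans step2 h
    · cases u; exact step2
  have hconn' : Gi.Connected S := fun z z' =>
    reach_trans (reach_symm (hallreach z)) (hallreach z')
  -- edge count
  have hScard : S.ncard = Nat.card V := by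
    have hhs := handshake_univ G S
    have : ∑ w ∈ (Set.toFinite (Set.univ : Set V)).toFinset, G.deg S w
        = 2 * Nat.card V := by
      have : Fintype V := Fintype.ofFinite V
      rw [Finset.sum_congr rfl (fun w _ => hdeg2 w), Finset.sum_const, smul_eq_mul,
        show (Set.toFinite (Set.univ : Set V)).toFinset = Finset.univ by ext w; simp,
        Finset.card_univ, ← Nat.card_eq_fintype_card, mul_comm]
    omega
  -- acyclicity
  have hacyc : Gi.Acyclic S := by
    intro h hhS p q hends hreach
    have hconn'' : Gi.Connected (S \ {h}) := connected_diff hconn' hends hreach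
    have hbound := connected_card_le Gi (S \ {h}) hconn''
    have hcard : (S \ {h}).ncard = S.ncard - 1 :=
      Set.ncard_diff_singleton_of_mem hhS
    have : Nonempty V := ⟨v⟩
    have hVpos : 0 < Nat.card V := Nat.card_pos
    have hsum : Nat.card (V ⊕ Unit) = Nat.card V + 1 := by
      rw [Nat.card_sum]
      simp
    omega
  exact ⟨⟨hconn', hacyc⟩, hdegx, hdegy, hdegw⟩

end Split
end Multigraph

namespace Multigraph
variable {V E : Type*}

section Rev
variable [DecidableEq E] {G : Multigraph V E}

lemma dtd_to_ham [Finite V] [Finite E]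
    {ea eb ec ed : E} {v wa wb : V}
    (hab : ea ≠ eb) (hwa : G.ends ea = s(v, wa)) (hwb : G.ends eb = s(v, wb))
    (hca : ec ≠ ea) (hcb : ec ≠ eb) (hda : ed ≠ ea) (hdb : ed ≠ eb) (hcd : ec ≠ ed)
    (hinc : G.incEdges Set.univ v = {ec, ed, ea, eb})
    (hreg : ∀ w : V, G.deg Set.univ w = 4)
    {T1 T2 : Set E}
    (hdtd : (G.splitVertex ea eb wa wb).IsDTD T1 T2)
    (hbal : ∀ z, (G.splitVertex ea eb wa wb).deg T1 z = (G.splitVertex ea eb wa wb).deg T2 z) :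
    Disjoint T1 T2 ∧ G.IsHamCycle T1 ∧ G.IsHamCycle T2 := by
  classical
  set Gi := G.splitVertex ea eb wa wb with hGi
  obtain ⟨huniv, hdisj, ⟨hc1, -⟩, ⟨hc2, -⟩⟩ := hdtd
  -- degree additivity
  have hadd : ∀ z : V ⊕ Unit, Gi.deg T1 z + Gi.deg T2 z = Gi.deg Set.univ z := by
    intro z
    have hu : Gi.incEdges T1 z ∪ Gi.incEdges T2 z = Gi.incEdges Set.univ z := by
      ext g
      simp only [incEdges, Set.mem_union, Set.mem_setOf_eq, Set.mem_univ, true_and]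
      constructor
      · rintro (⟨-, hz⟩ | ⟨-, hz⟩) <;> exact hz
      · intro hz
        have : g ∈ T1 ∪ T2 := huniv ▸ Set.mem_univ g
        rcases this with hg | hg
        · exact Or.inl ⟨hg, hz⟩
        · exact Or.inr ⟨hg, hz⟩
    have hd : Disjoint (Gi.incEdges T1 z) (Gi.incEdges T2 z) := by
      rw [Set.disjoint_left]
      rintro g ⟨hg1, -⟩ ⟨hg2, -⟩
      exact Set.disjoint_left.mp hdisj hg1 hg2
    rw [deg, deg, deg, ← Set.ncard_union_eq hd (Set.toFinite _) (Set.toFinite _), hu]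
  -- Gi degrees in univ
  have hux : Gi.deg Set.univ (Sum.inl v) = 2 := by
    rw [deg, hGi, split_inc_x hab hwa hwb, hinc]
    rw [show ({ec, ed, ea, eb} : Set E) \ {ea, eb} = {ec, ed} by
      ext g
      simp only [Set.mem_diff, Set.mem_insert_iff, Set.mem_singleton_iff]
      constructor
      · rintro ⟨(rfl | rfl | rfl | rfl), hg⟩
        · exact Or.inl rfl
        · exact Or.inr rfl
        · exact absurd (Or.inl rfl) hg
        · exact absurd (Or.inr rfl) hg
      · rintro (rfl | rfl)
        · exact ⟨Or.inl rfl, by rintro (rfl | rfl); exacts [hca rfl, hcb rfl]⟩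
        · exact ⟨Or.inr (Or.inl rfl), by rintro (rfl | rfl); exacts [hda rfl, hdb rfl]⟩]
    rw [Set.ncard_insert_of_notMem (by simpa using hcd) (Set.toFinite _), Set.ncard_singleton]
  have huy : Gi.deg Set.univ (Sum.inr ()) = 2 := by
    rw [deg, hGi, split_inc_y hab hwa hwb, Set.univ_inter]
    rw [Set.ncard_insert_of_notMem (by simpa using hab) (Set.toFinite _), Set.ncard_singleton]
  have huw : ∀ w : V, w ≠ v → Gi.deg Set.univ (Sum.inl w) = 4 := by
    intro w hw
    rw [deg, hGi, split_inc_inl hab hwa hwb _ hw]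
    exact hreg w
  -- a single tree is a ham cycle
  have ham : ∀ T : Set E, Gi.Connected T → Gi.deg T (Sum.inl v) = 1 →
      Gi.deg T (Sum.inr ()) = 1 → (∀ w : V, w ≠ v → Gi.deg T (Sum.inl w) = 2) →
      G.IsHamCycle T := by
    intro T hconn hdx hdy hdw
    constructor
    · intro a b
      have := split_reach_down hab hwa hwb (hconn (Sum.inl a) (Sum.inl b))
      simpa using this
    · intro w
      by_cases hw : w = v
      · rw [hw]
        have hsplit := split_inc_v hab hwa hwb (G := G) T
        have hd : Disjoint (Gi.incEdges T (Sum.inl v)) (Gi.incEdges T (Sum.inr ())) := by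
          rw [hGi, split_inc_x hab hwa hwb, split_inc_y hab hwa hwb, Set.disjoint_left]
          rintro g ⟨-, hg1⟩ ⟨-, hg2⟩
          exact hg1 hg2
        rw [deg, hsplit, Set.ncard_union_eq hd (Set.toFinite _) (Set.toFinite _)]
        rw [← deg, ← deg, hdx, hdy]
      · rw [deg, ← split_inc_inl hab hwa hwb T hw, ← deg]
        exact hdw w hw
  refine ⟨hdisj, ham T1 hc1 ?_ ?_ ?_, ham T2 hc2 ?_ ?_ ?_⟩
  · have := hadd (Sum.inl v); have hb := hbal (Sum.inl v); omega
  · have := hadd (Sum.inr ()); have hb := hbal (Sum.inr ()); omega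
  · intro w hw; have := hadd (Sum.inl w); have hb := hbal (Sum.inl w)
    have := huw w hw; omega
  · have := hadd (Sum.inl v); have hb := hbal (Sum.inl v); omega
  · have := hadd (Sum.inr ()); have hb := hbal (Sum.inr ()); omega
  · intro w hw; have := hadd (Sum.inl w); have hb := hbal (Sum.inl w)
    have := huw w hw; omega

end Rev
end Multigraph

namespace Multigraph
variable {V E : Type*}

section Main
variable [Finite V] [Finite E] [DecidableEq E] {G : Multigraph V E}

/-- Assemble two Hamiltonian cycles into a perfectly balanced DTD of a split graph. -/
lemma assemble {v wa wb : V} {ea eb : E}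
    (hab : ea ≠ eb) (hwa : G.ends ea = s(v, wa)) (hwb : G.ends eb = s(v, wb))
    {C1 C2 : Set E} {e f e' f' : E}
    (huniv : C1 ∪ C2 = Set.univ) (hdisj : Disjoint C1 C2)
    (ham1 : G.IsHamCycle C1) (ham2 : G.IsHamCycle C2)
    (hinc1 : G.incEdges C1 v = {e, f}) (hef : e ≠ f)
    (hea : e ≠ ea) (heb : e ≠ eb) (hfm : f = ea ∨ f = eb)
    (hinc2 : G.incEdges C2 v = {e', f'}) (hef' : e' ≠ f')
    (hea' : e' ≠ ea) (heb' : e' ≠ eb) (hfm' : f' = ea ∨ f' = eb) :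
    (G.splitVertex ea eb wa wb).HasPerfectlyBalancedDTD := by
  obtain ⟨t1, d1x, d1y, d1w⟩ :=
    ham_to_tree hab hwa hwb ham1.1 ham1.2 hinc1 hef hea heb hfm
  obtain ⟨t2, d2x, d2y, d2w⟩ :=
    ham_to_tree hab hwa hwb ham2.1 ham2.2 hinc2 hef' hea' heb' hfm'
  refine ⟨C1, C2, ⟨huniv, hdisj, t1, t2⟩, ?_⟩
  rintro (w | u)
  · by_cases hw : w = v
    · rw [hw, d1x, d2x]
    · rw [d1w w hw, d2w w hw]
  · cases u
    rw [d1y, d2y]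

lemma main_forward {v v1 v2 v3 v4 : V} {e1 e2 e3 e4 : E}
    (he12 : e1 ≠ e2) (he13 : e1 ≠ e3) (he14 : e1 ≠ e4)
    (he23 : e2 ≠ e3) (he24 : e2 ≠ e4) (he34 : e3 ≠ e4)
    (hend1 : G.ends e1 = s(v, v1)) (hend2 : G.ends e2 = s(v, v2))
    (hend3 : G.ends e3 = s(v, v3)) (hend4 : G.ends e4 = s(v, v4))
    (hincv : G.incEdges Set.univ v = {e1, e2, e3, e4})
    {C1 C2 : Set E} (hdisj : Disjoint C1 C2) (huniv : C1 ∪ C2 = Set.univ)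
    (ham1 : G.IsHamCycle C1) (ham2 : G.IsHamCycle C2) (he1C : e1 ∈ C1) :
    ((G.splitVertex e3 e4 v3 v4).HasPerfectlyBalancedDTD ∨
     (G.splitVertex e2 e4 v2 v4).HasPerfectlyBalancedDTD ∨
     (G.splitVertex e2 e3 v2 v3).HasPerfectlyBalancedDTD) := by
  have hv1 : v ∈ G.ends e1 := by rw [hend1]; exact Sym2.mem_mk_left _ _
  have hv2 : v ∈ G.ends e2 := by rw [hend2]; exact Sym2.mem_mk_left _ _
  have hv3 : v ∈ G.ends e3 := by rw [hend3]; exact Sym2.mem_mk_left _ _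
  have hv4 : v ∈ G.ends e4 := by rw [hend4]; exact Sym2.mem_mk_left _ _
  have hmemv : ∀ g : E, v ∈ G.ends g → (g = e1 ∨ g = e2 ∨ g = e3 ∨ g = e4) := by
    intro g hg
    have : g ∈ G.incEdges Set.univ v := ⟨Set.mem_univ g, hg⟩
    rw [hincv] at this
    simpa using this
  have hn1 : (G.incEdges C1 v).ncard = 2 := ham1.2 v
  have hn2 : (G.incEdges C2 v).ncard = 2 := ham2.2 v
  have hfin : ∀ s : Set E, s.Finite := fun s => Set.toFinite s
  -- at most two incident edges of a cycle at v
  have three : ∀ (C : Set E), (G.incEdges C v).ncard = 2 →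
      ∀ a b c : E, a ∈ C → b ∈ C → c ∈ C → v ∈ G.ends a → v ∈ G.ends b →
      v ∈ G.ends c → a ≠ b → a ≠ c → b ≠ c → False := by
    intro C hC a b c ha hb hc hva hvb hvc hab hac hbc
    have hsub : ({a, b, c} : Set E) ⊆ G.incEdges C v := by
      rintro g (rfl | rfl | rfl)
      · exact ⟨ha, hva⟩
      · exact ⟨hb, hvb⟩
      · exact ⟨hc, hvc⟩
    have h3 : ({a, b, c} : Set E).ncard = 3 := by
      rw [Set.ncard_insert_of_notMem (by simp [hab, hac]) (hfin _),
        Set.ncard_insert_of_notMem (by simp [hbc]) (hfin _), Set.ncard_singleton]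
    have := Set.ncard_le_ncard hsub (hfin _)
    omega
  have hC2mem : ∀ g : E, g ∉ C1 → g ∈ C2 := by
    intro g hg
    have : g ∈ C1 ∪ C2 := huniv ▸ Set.mem_univ g
    rcases this with h | h
    · exact absurd h hg
    · exact h
  have hC1not : ∀ g : E, g ∈ C1 → g ∉ C2 := fun g hg => Set.disjoint_left.mp hdisj hg
  -- incidence set determination
  have hdet : ∀ (C : Set E) (a b : E), a ∈ C → b ∈ C → v ∈ G.ends a → v ∈ G.ends b →
      (∀ g : E, g ∈ C → v ∈ G.ends g → g = a ∨ g = b) → G.incEdges C v = {a, b} := by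
    intro C a b ha hb hva hvb hother
    ext g
    constructor
    · rintro ⟨hgC, hgv⟩
      simpa using hother g hgC hgv
    · rintro (rfl | rfl)
      · exact ⟨ha, hva⟩
      · exact ⟨hb, hvb⟩
  by_cases h2 : e2 ∈ C1
  · have h3 : e3 ∉ C1 := fun h3 => three C1 hn1 e1 e2 e3 he1C h2 h3 hv1 hv2 hv3 he12 he13 he23
    have h4 : e4 ∉ C1 := fun h4 => three C1 hn1 e1 e2 e4 he1C h2 h4 hv1 hv2 hv4 he12 he14 he24
    have h3' := hC2mem e3 h3
    have h4' := hC2mem e4 h4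
    have hinc1 : G.incEdges C1 v = {e1, e2} := by
      refine hdet C1 e1 e2 he1C h2 hv1 hv2 (fun g hg hgv => ?_)
      rcases hmemv g hgv with rfl | rfl | rfl | rfl
      · exact Or.inl rfl
      · exact Or.inr rfl
      · exact absurd hg h3
      · exact absurd hg h4
    have hinc2 : G.incEdges C2 v = {e3, e4} := by
      refine hdet C2 e3 e4 h3' h4' hv3 hv4 (fun g hg hgv => ?_)
      rcases hmemv g hgv with rfl | rfl | rfl | rfl
      · exact absurd hg (hC1not _ he1C)
      · exact absurd hg (hC1not _ h2)
      · exact Or.inl rfl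
      · exact Or.inr rfl
    refine Or.inr (Or.inl (assemble he24 hend2 hend4 huniv hdisj ham1 ham2
      hinc1 he12 he12 he14 (Or.inl rfl) hinc2 he34 (Ne.symm he23) he34 (Or.inr rfl)))
  · have h2' := hC2mem e2 h2
    by_cases h3 : e3 ∈ C1
    · have h4 : e4 ∉ C1 := fun h4 => three C1 hn1 e1 e3 e4 he1C h3 h4 hv1 hv3 hv4 he13 he14 he34
      have h4' := hC2mem e4 h4
      have hinc1 : G.incEdges C1 v = {e1, e3} := by
        refine hdet C1 e1 e3 he1C h3 hv1 hv3 (fun g hg hgv => ?_)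
        rcases hmemv g hgv with rfl | rfl | rfl | rfl
        · exact Or.inl rfl
        · exact absurd hg h2
        · exact Or.inr rfl
        · exact absurd hg h4
      have hinc2 : G.incEdges C2 v = {e2, e4} := by
        refine hdet C2 e2 e4 h2' h4' hv2 hv4 (fun g hg hgv => ?_)
        rcases hmemv g hgv with rfl | rfl | rfl | rfl
        · exact absurd hg (hC1not _ he1C)
        · exact Or.inl rfl
        · exact absurd hg (hC1not _ h3)
        · exact Or.inr rfl
      exact Or.inl (assemble he34 hend3 hend4 huniv hdisj ham1 ham2
        hinc1 he13 he13 he14 (Or.inl rfl) hinc2 he24 he23 he24 (Or.inr rfl))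
    · have h3' := hC2mem e3 h3
      have h4 : e4 ∈ C1 := by
        by_contra h4
        have h4' := hC2mem e4 h4
        have hinc1 : G.incEdges C1 v = {e1} := by
          ext g
          constructor
          · rintro ⟨hgC, hgv⟩
            rcases hmemv g hgv with rfl | rfl | rfl | rfl
            · rfl
            · exact absurd hgC h2
            · exact absurd hgC h3
            · exact absurd hgC h4
          · rintro rfl
            exact ⟨he1C, hv1⟩
        rw [hinc1, Set.ncard_singleton] at hn1
        omega
      have h4'' := hC1not e4 h4
      have hinc1 : G.incEdges C1 v = {e1, e4} := by
        refine hdet C1 e1 e4 he1C h4 hv1 hv4 (fun g hg hgv => ?_)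
        rcases hmemv g hgv with rfl | rfl | rfl | rfl
        · exact Or.inl rfl
        · exact absurd hg h2
        · exact absurd hg h3
        · exact Or.inr rfl
      have hinc2 : G.incEdges C2 v = {e2, e3} := by
        refine hdet C2 e2 e3 h2' h3' hv2 hv3 (fun g hg hgv => ?_)
        rcases hmemv g hgv with rfl | rfl | rfl | rfl
        · exact absurd hg (hC1not _ he1C)
        · exact Or.inl rfl
        · exact Or.inr rfl
        · exact absurd hg h4''
      exact Or.inl (assemble he34 hend3 hend4 huniv hdisj ham1 ham2
        hinc1 he14 he13 he14 (Or.inr rfl) hinc2 he23 he23 he24 (Or.inl rfl))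

end Main
end Multigraph



/-- **Theorem (Statement 19).** Let `G` be a finite 4-regular graph, `v` a
vertex with distinct neighbours `v1, v2, v3, v4` joined to `v` by the edges
`e1, e2, e3, e4`, and for `i = 1, 2, 3` let `Gi` be obtained from `G` by
deleting `v` and adding new vertices `x, y` with `x` joined to `v1, v_{i+1}`
and `y` joined to the other two neighbours.  Then `G` contains two
edge-disjoint Hamiltonian cycles iff some `Gi` has a perfectly balanced
double tree decomposition. -/
theorem two_ham_cycles_iff_perfectly_balanced {V E : Type*}
    [Finite V] [Finite E] [DecidableEq E]
    (G : Multigraph V E) (hreg : ∀ w : V, G.deg Set.univ w = 4)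
    (v v1 v2 v3 v4 : V)
    (h12 : v1 ≠ v2) (h13 : v1 ≠ v3) (h14 : v1 ≠ v4)
    (h23 : v2 ≠ v3) (h24 : v2 ≠ v4) (h34 : v3 ≠ v4)
    (e1 e2 e3 e4 : E)
    (he12 : e1 ≠ e2) (he13 : e1 ≠ e3) (he14 : e1 ≠ e4)
    (he23 : e2 ≠ e3) (he24 : e2 ≠ e4) (he34 : e3 ≠ e4)
    (hend1 : G.ends e1 = s(v, v1)) (hend2 : G.ends e2 = s(v, v2))
    (hend3 : G.ends e3 = s(v, v3)) (hend4 : G.ends e4 = s(v, v4)) :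
    (∃ C1 C2 : Set E, Disjoint C1 C2 ∧ G.IsHamCycle C1 ∧ G.IsHamCycle C2) ↔
      ((G.splitVertex e3 e4 v3 v4).HasPerfectlyBalancedDTD ∨
       (G.splitVertex e2 e4 v2 v4).HasPerfectlyBalancedDTD ∨
       (G.splitVertex e2 e3 v2 v3).HasPerfectlyBalancedDTD) := by
  classical
  have hfin : ∀ s : Set E, s.Finite := fun s => Set.toFinite s
  -- the four edges at v are exactly e1,e2,e3,e4
  have hincv : G.incEdges Set.univ v = {e1, e2, e3, e4} := by
    have hsub : ({e1, e2, e3, e4} : Set E) ⊆ G.incEdges Set.univ v := by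
      rintro g (rfl | rfl | rfl | rfl)
      · exact ⟨Set.mem_univ _, by rw [hend1]; exact Sym2.mem_mk_left _ _⟩
      · exact ⟨Set.mem_univ _, by rw [hend2]; exact Sym2.mem_mk_left _ _⟩
      · exact ⟨Set.mem_univ _, by rw [hend3]; exact Sym2.mem_mk_left _ _⟩
      · exact ⟨Set.mem_univ _, by rw [hend4]; exact Sym2.mem_mk_left _ _⟩
    have hcard4 : ({e1, e2, e3, e4} : Set E).ncard = 4 := by
      rw [Set.ncard_insert_of_notMem (by simp [he12, he13, he14]) (hfin _),
        Set.ncard_insert_of_notMem (by simp [he23, he24]) (hfin _),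
        Set.ncard_insert_of_notMem (by simp [he34]) (hfin _), Set.ncard_singleton]
    have hle : (G.incEdges Set.univ v).ncard ≤ ({e1, e2, e3, e4} : Set E).ncard := by
      rw [hcard4]
      have := hreg v
      rw [Multigraph.deg] at this
      omega
    exact (Set.eq_of_subset_of_ncard_le hsub hle (hfin _)).symm
  constructor
  · rintro ⟨C1, C2, hdisj, ham1, ham2⟩
    -- the cycles cover all edges
    have huniv : C1 ∪ C2 = Set.univ := by
      by_contra hne
      obtain ⟨g, hg⟩ : ∃ g, g ∉ C1 ∪ C2 := by
        by_contra hforall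
        push_neg at hforall
        exact hne (Set.eq_univ_of_forall hforall)
      obtain ⟨u, w, hguw⟩ := Multigraph.exists_mem_ends G g
      have hgC1 : g ∉ C1 := fun h => hg (Or.inl h)
      have hgC2 : g ∉ C2 := fun h => hg (Or.inr h)
      have hsub : G.incEdges C1 u ∪ (G.incEdges C2 u ∪ {g}) ⊆ G.incEdges Set.univ u := by
        rintro g' (h | h | h)
        · exact ⟨Set.mem_univ _, h.2⟩
        · exact ⟨Set.mem_univ _, h.2⟩
        · rw [Set.mem_singleton_iff] at h
          subst h
          exact ⟨Set.mem_univ _, by rw [hguw]; exact Sym2.mem_mk_left _ _⟩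
      have hd2 : Disjoint (G.incEdges C2 u) ({g} : Set E) := by
        rw [Set.disjoint_singleton_right]
        exact fun h => hgC2 h.1
      have hd1 : Disjoint (G.incEdges C1 u) (G.incEdges C2 u ∪ {g}) := by
        rw [Set.disjoint_union_right]
        constructor
        · rw [Set.disjoint_left]
          rintro g' ⟨h1, -⟩ ⟨h2, -⟩
          exact Set.disjoint_left.mp hdisj h1 h2
        · rw [Set.disjoint_singleton_right]
          exact fun h => hgC1 h.1
      have h5 : (G.incEdges C1 u ∪ (G.incEdges C2 u ∪ {g})).ncard = 5 := by
        rw [Set.ncard_union_eq hd1 (hfin _) (hfin _), Set.ncard_union_eq hd2 (hfin _) (hfin _)]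
        rw [show (G.incEdges C1 u).ncard = 2 from ham1.2 u,
          show (G.incEdges C2 u).ncard = 2 from ham2.2 u, Set.ncard_singleton]
      have hle := Set.ncard_le_ncard hsub (hfin _)
      have h4 := hreg u
      rw [Multigraph.deg] at h4
      omega
    by_cases he1C : e1 ∈ C1
    · exact Multigraph.main_forward he12 he13 he14 he23 he24 he34 hend1 hend2 hend3 hend4
        hincv hdisj huniv ham1 ham2 he1C
    · have he1C2 : e1 ∈ C2 := by
        have : e1 ∈ C1 ∪ C2 := huniv ▸ Set.mem_univ e1
        rcases this with h | h
        · exact absurd h he1C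
        · exact h
      exact Multigraph.main_forward he12 he13 he14 he23 he24 he34 hend1 hend2 hend3 hend4
        hincv hdisj.symm (by rw [Set.union_comm]; exact huniv) ham2 ham1 he1C2
  · rintro (⟨T1, T2, hdtd, hbal⟩ | ⟨T1, T2, hdtd, hbal⟩ | ⟨T1, T2, hdtd, hbal⟩)
    · obtain ⟨hd, hh1, hh2⟩ := Multigraph.dtd_to_ham he34 hend3 hend4 he13 he14 he23 he24 he12
        hincv hreg hdtd hbal
      exact ⟨T1, T2, hd, hh1, hh2⟩
    · have hincv2 : G.incEdges Set.univ v = {e1, e3, e2, e4} := by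
        rw [hincv]
        ext g
        simp only [Set.mem_insert_iff, Set.mem_singleton_iff]
        tauto
      obtain ⟨hd, hh1, hh2⟩ := Multigraph.dtd_to_ham he24 hend2 hend4 he12 he14 (Ne.symm he23)
        he34 he13 hincv2 hreg hdtd hbal
      exact ⟨T1, T2, hd, hh1, hh2⟩
    · have hincv3 : G.incEdges Set.univ v = {e1, e4, e2, e3} := by
        rw [hincv]
        ext g
        simp only [Set.mem_insert_iff, Set.mem_singleton_iff]
        tauto
      obtain ⟨hd, hh1, hh2⟩ := Multigraph.dtd_to_ham he23 hend2 hend3 he12 he13 (Ne.symm he24)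
        (Ne.symm he34) he14 hincv3 hreg hdtd hbal
      exact ⟨T1, T2, hd, hh1, hh2⟩
end
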